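/- arXiv:1409.4659 — 3 statements merged into one kernel-verified Lean document; each statement's English description precedes it below -/
import Mathlib

section
/- Let b_i denote the unique fixed point of the contraction f_i (so f_i(b_i) = b_i). If M = sup{|b_i| : i ∈ ℕ} < ∞ and σ* = sup{σ_i : i ∈ ℕ} < 1, then the pullback attractor of the non-autonomous iterated function system exists. -/
open Set Metric Filter Bornology MeasureTheory
open scoped ENNReal NNReal

/-- A non-autonomous iterated function system: contractions `f i` with ratios
`σ i ∈ (0,1)` and finite nonempty index sets `I k ⊆ ℕ` for `k ≥ 1`. -/
structure NAIFS (E : Type*) [MetricSpace E] where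
  f : ℕ → E → E
  σ : ℕ → ℝ
  σ_pos : ∀ i, 0 < σ i
  σ_lt_one : ∀ i, σ i < 1
  contract : ∀ i x y, dist (f i x) (f i y) ≤ σ i * dist x y
  I : ℕ → Finset ℕ
  I_nonempty : ∀ k, 1 ≤ k → (I k).Nonempty

variable {E : Type*} [MetricSpace E]

/-- `S^k(B) = ⋃_{i ∈ I_{k+1}} f_i(B)`. -/
def Sstep (sys : NAIFS E) (k : ℕ) (B : Set E) : Set E :=
  ⋃ i ∈ sys.I (k + 1), sys.f i '' B

/-- `SiterN sys k n B = S^{k, k+n}(B) = S^k ∘ ⋯ ∘ S^{k+n-1} (B)`. -/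
def SiterN (sys : NAIFS E) : ℕ → ℕ → Set E → Set E
  | _, 0, B => B
  | k, n + 1, B => Sstep sys k (SiterN sys (k + 1) n B)

/-- Hausdorff semi-distance `ρ_H(A,B) = sup_{x ∈ A} inf_{y ∈ B} d(x,y)`. -/
noncomputable def semidist (A B : Set E) : ℝ≥0∞ :=
  ⨆ x ∈ A, EMetric.infEdist x B

/-- `{F^k}` is a pullback attractor: each `F^k` compact, uniformly bounded,
invariant `F^k = S^k(F^{k+1})`, and `ρ_H(S^{k,l}(B), F^k) → 0` as `l → ∞`
for every bounded `B`. -/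
def IsPullbackAttractor (sys : NAIFS E) (F : ℕ → Set E) : Prop :=
  (∀ k, IsCompact (F k)) ∧
  IsBounded (⋃ k, F k) ∧
  (∀ k, F k = Sstep sys k (F (k + 1))) ∧
  (∀ B : Set E, IsBounded B → ∀ k,
    Tendsto (fun l => semidist (SiterN sys k (l - k) B) (F k)) atTop (nhds 0))

/- ### Auxiliary lemmas -/

lemma Sstep_mono (sys : NAIFS E) {B B' : Set E} (h : B ⊆ B') (k : ℕ) :
    Sstep sys k B ⊆ Sstep sys k B' :=
  Set.iUnion₂_mono fun _ _ => Set.image_mono h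

lemma SiterN_mono (sys : NAIFS E) :
    ∀ (n k : ℕ) {B B' : Set E}, B ⊆ B' → SiterN sys k n B ⊆ SiterN sys k n B'
  | 0, _, _, _, h => h
  | n + 1, k, _, _, h => Sstep_mono sys (SiterN_mono sys n (k + 1) h) k

lemma SiterN_succ_eq (sys : NAIFS E) :
    ∀ (n k : ℕ) (B : Set E), SiterN sys k (n + 1) B = SiterN sys k n (Sstep sys (k + n) B)
  | 0, k, B => rfl
  | n + 1, k, B => by
    show Sstep sys k (SiterN sys (k + 1) (n + 1) B) = _
    rw [SiterN_succ_eq sys n (k + 1) B, show k + 1 + n = k + (n + 1) from by omega]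
    rfl

lemma SiterN_empty (sys : NAIFS E) : ∀ (n k : ℕ), SiterN sys k n (∅ : Set E) = ∅
  | 0, _ => rfl
  | n + 1, k => by
    show Sstep sys k (SiterN sys (k + 1) n ∅) = ∅
    rw [SiterN_empty sys n (k + 1)]
    simp [Sstep]

lemma Sstep_nonempty (sys : NAIFS E) {B : Set E} (hB : B.Nonempty) (k : ℕ) :
    (Sstep sys k B).Nonempty := by
  obtain ⟨i, hi⟩ := sys.I_nonempty (k + 1) (by omega)
  obtain ⟨x, hx⟩ := hB
  exact ⟨sys.f i x, Set.mem_iUnion₂.2 ⟨i, hi, ⟨x, hx, rfl⟩⟩⟩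

lemma SiterN_nonempty (sys : NAIFS E) :
    ∀ (n k : ℕ) {B : Set E}, B.Nonempty → (SiterN sys k n B).Nonempty
  | 0, _, _, hB => hB
  | n + 1, k, _, hB => Sstep_nonempty sys (SiterN_nonempty sys n (k + 1) hB) k

lemma Sstep_isCompact (sys : NAIFS E) (hcont : ∀ i, Continuous (sys.f i))
    {B : Set E} (hB : IsCompact B) (k : ℕ) : IsCompact (Sstep sys k B) :=
  (sys.I (k + 1)).finite_toSet.isCompact_biUnion fun i _ => hB.image (hcont i)

lemma SiterN_isCompact (sys : NAIFS E) (hcont : ∀ i, Continuous (sys.f i)) :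
    ∀ (n k : ℕ) {B : Set E}, IsCompact B → IsCompact (SiterN sys k n B)
  | 0, _, _, hB => hB
  | n + 1, k, _, hB => Sstep_isCompact sys hcont (SiterN_isCompact sys hcont n (k + 1) hB) k

lemma infEdist_le_semidist {A B : Set E} {x : E} (hx : x ∈ A) :
    EMetric.infEdist x B ≤ semidist A B :=
  le_iSup₂ (f := fun x (_ : x ∈ A) => EMetric.infEdist x B) x hx

lemma semidist_Sstep_le (sys : NAIFS E) (K : ℝ≥0) (hK0 : (K : ℝ≥0∞) ≠ 0)
    (hlip : ∀ i, LipschitzWith K (sys.f i)) (k : ℕ) (B B' : Set E) :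
    semidist (Sstep sys k B) (Sstep sys k B') ≤ (K : ℝ≥0∞) * semidist B B' := by
  apply iSup₂_le
  intro x hx
  simp only [Sstep, Set.mem_iUnion] at hx
  obtain ⟨i, hi, y, hyB, rfl⟩ := hx
  have h1 : EMetric.infEdist (sys.f i y) (Sstep sys k B')
      ≤ EMetric.infEdist (sys.f i y) (sys.f i '' B') :=
    EMetric.infEdist_anti (Set.subset_iUnion₂ (s := fun i (_ : i ∈ sys.I (k + 1)) => sys.f i '' B') i hi)
  have h2 : EMetric.infEdist (sys.f i y) (sys.f i '' B')
      ≤ (K : ℝ≥0∞) * EMetric.infEdist y B' := by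
    have heq : (K : ℝ≥0∞) * EMetric.infEdist y B'
        = ⨅ z ∈ B', (K : ℝ≥0∞) * edist y z := by
      simp only [EMetric.infEdist, Metric.infEDist]
      rw [ENNReal.mul_iInf_of_ne hK0 ENNReal.coe_ne_top]
      exact iInf_congr fun z => ENNReal.mul_iInf_of_ne hK0 ENNReal.coe_ne_top
    rw [heq]
    refine le_iInf₂ fun z hz => ?_
    exact (EMetric.infEdist_le_edist_of_mem (Set.mem_image_of_mem _ hz)).trans (hlip i y z)
  exact h1.trans (h2.trans (mul_le_mul_right (infEdist_le_semidist hyB) _))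

lemma semidist_SiterN_le (sys : NAIFS E) (K : ℝ≥0) (hK0 : (K : ℝ≥0∞) ≠ 0)
    (hlip : ∀ i, LipschitzWith K (sys.f i)) :
    ∀ (n k : ℕ) (B B' : Set E),
      semidist (SiterN sys k n B) (SiterN sys k n B') ≤ (K : ℝ≥0∞) ^ n * semidist B B'
  | 0, _, B, B' => by
    show semidist B B' ≤ (K : ℝ≥0∞) ^ 0 * semidist B B'
    simp
  | n + 1, k, B, B' => by
    show semidist (Sstep sys k (SiterN sys (k + 1) n B)) (Sstep sys k (SiterN sys (k + 1) n B'))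
        ≤ _
    calc semidist (Sstep sys k (SiterN sys (k + 1) n B)) (Sstep sys k (SiterN sys (k + 1) n B'))
        ≤ (K : ℝ≥0∞) * semidist (SiterN sys (k + 1) n B) (SiterN sys (k + 1) n B') :=
          semidist_Sstep_le sys K hK0 hlip k _ _
      _ ≤ (K : ℝ≥0∞) * ((K : ℝ≥0∞) ^ n * semidist B B') :=
          mul_le_mul_right (semidist_SiterN_le sys K hK0 hlip n (k + 1) B B') _
      _ = (K : ℝ≥0∞) ^ (n + 1) * semidist B B' := by rw [pow_succ']; ring

/-- If the fixed points `b_i` of the contractions `f_i` are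
uniformly bounded and `σ* = sup σ_i < 1`, then the pullback attractor exists. -/
theorem pullback_attractor_exists {d : ℕ}
    (sys : NAIFS (EuclideanSpace ℝ (Fin d)))
    (b : ℕ → EuclideanSpace ℝ (Fin d))
    (hb : ∀ i, sys.f i (b i) = b i)
    (hM : ∃ M : ℝ, ∀ i, ‖b i‖ ≤ M)
    (hσ : sSup (Set.range sys.σ) < 1) :
    ∃ F : ℕ → Set (EuclideanSpace ℝ (Fin d)), IsPullbackAttractor sys F := by
  obtain ⟨M₀, hM₀⟩ := hM
  set s : ℝ := sSup (Set.range sys.σ) with hsdef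
  have hbdd : BddAbove (Set.range sys.σ) := ⟨1, by rintro y ⟨i, rfl⟩; exact (sys.σ_lt_one i).le⟩
  have hs_le : ∀ i, sys.σ i ≤ s := fun i => le_csSup hbdd ⟨i, rfl⟩
  have hs0 : 0 < s := lt_of_lt_of_le (sys.σ_pos 0) (hs_le 0)
  have hs1 : s < 1 := hσ
  set Mv : ℝ := max M₀ 0 with hMvdef
  have hMv : ∀ i, ‖b i‖ ≤ Mv := fun i => (hM₀ i).trans (le_max_left _ _)
  have hMv0 : (0 : ℝ) ≤ Mv := le_max_right _ _
  set R : ℝ := Mv * (1 + s) / (1 - s) with hRdef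
  have h1s : (0 : ℝ) < 1 - s := by linarith
  have hR0 : 0 ≤ R := div_nonneg (mul_nonneg hMv0 (by linarith)) h1s.le
  have hRs : R * (1 - s) = Mv * (1 + s) := by
    rw [hRdef]; field_simp
  -- the invariant ball
  have key : ∀ i x, ‖x‖ ≤ R → ‖sys.f i x‖ ≤ R := by
    intro i x hx
    have h1 : dist (sys.f i x) (b i) ≤ s * dist x (b i) := by
      calc dist (sys.f i x) (b i) = dist (sys.f i x) (sys.f i (b i)) := by rw [hb i]
        _ ≤ sys.σ i * dist x (b i) := sys.contract i x (b i)
        _ ≤ s * dist x (b i) := mul_le_mul_of_nonneg_right (hs_le i) dist_nonneg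
    have h2 : dist x (b i) ≤ R + Mv := by
      rw [dist_eq_norm]
      exact (norm_sub_le x (b i)).trans (add_le_add hx (hMv i))
    have h3 : ‖sys.f i x‖ ≤ dist (sys.f i x) (b i) + ‖b i‖ := by
      rw [dist_eq_norm]
      calc ‖sys.f i x‖ = ‖sys.f i x - b i + b i‖ := by rw [sub_add_cancel]
        _ ≤ ‖sys.f i x - b i‖ + ‖b i‖ := norm_add_le _ _
    have h4 : s * dist x (b i) ≤ s * (R + Mv) := mul_le_mul_of_nonneg_left h2 hs0.le
    have h5 := hMv i
    nlinarith [hRs]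
  set X : Set (EuclideanSpace ℝ (Fin d)) := Metric.closedBall 0 R with hXdef
  have hXc : IsCompact X := isCompact_closedBall _ _
  have hXne : X.Nonempty := ⟨0, mem_closedBall_self hR0⟩
  have hfmap : ∀ i, ∀ x ∈ X, sys.f i x ∈ X := by
    intro i x hx
    rw [hXdef, mem_closedBall_zero_iff] at hx ⊢
    exact key i x hx
  have hSstepX : ∀ (kk : ℕ) {B : Set (EuclideanSpace ℝ (Fin d))}, B ⊆ X → Sstep sys kk B ⊆ X := by
    intro kk B hB x hx
    simp only [Sstep, Set.mem_iUnion] at hx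
    obtain ⟨i, hi, y, hy, rfl⟩ := hx
    exact hfmap i y (hB hy)
  have hIterX : ∀ (n kk : ℕ), SiterN sys kk n X ⊆ X := by
    intro n
    induction n with
    | zero => intro kk; exact subset_rfl
    | succ n ih =>
      intro kk
      show Sstep sys kk (SiterN sys (kk + 1) n X) ⊆ X
      exact hSstepX kk (ih (kk + 1))
  have hAanti : ∀ (kk : ℕ), Antitone (fun n => SiterN sys kk n X) := by
    intro kk
    apply antitone_nat_of_succ_le
    intro n
    rw [SiterN_succ_eq]
    exact SiterN_mono sys n kk (hSstepX (kk + n) subset_rfl)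
  -- Lipschitz data
  set σN : ℝ≥0 := Real.toNNReal s with hσNdef
  have hsN : (σN : ℝ) = s := Real.coe_toNNReal s hs0.le
  have hlip : ∀ i, LipschitzWith σN (sys.f i) := by
    intro i
    apply LipschitzWith.of_dist_le_mul
    intro x y
    refine (sys.contract i x y).trans ?_
    rw [hsN]
    exact mul_le_mul_of_nonneg_right (hs_le i) dist_nonneg
  have hcont : ∀ i, Continuous (sys.f i) := fun i => (hlip i).continuous
  have hσN0 : (σN : ℝ≥0∞) ≠ 0 := by
    simp only [ne_eq, ENNReal.coe_eq_zero]
    exact (Real.toNNReal_pos.2 hs0).ne'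
  have hσN1 : (σN : ℝ≥0∞) < 1 := by
    rw [← ENNReal.coe_one, ENNReal.coe_lt_coe, ← NNReal.coe_lt_coe, hsN, NNReal.coe_one]
    exact hs1
  have hAcomp : ∀ (n kk : ℕ), IsCompact (SiterN sys kk n X) :=
    fun n kk => SiterN_isCompact sys hcont n kk hXc
  have hAne : ∀ (n kk : ℕ), (SiterN sys kk n X).Nonempty :=
    fun n kk => SiterN_nonempty sys n kk hXne
  -- the attractor
  set F : ℕ → Set (EuclideanSpace ℝ (Fin d)) := fun k => ⋂ n, SiterN sys k n X with hFdef
  have hFX : ∀ k, F k ⊆ X := fun k => Set.iInter_subset _ 0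
  have hFcomp : ∀ k, IsCompact (F k) := fun k =>
    hXc.of_isClosed_subset (isClosed_iInter fun n => (hAcomp n k).isClosed) (hFX k)
  have hFne : ∀ k, (F k).Nonempty := fun k =>
    IsCompact.nonempty_iInter_of_sequence_nonempty_isCompact_isClosed _
      (fun n => hAanti k (Nat.le_succ n)) (fun n => hAne n k) (hAcomp 0 k)
      (fun n => (hAcomp n k).isClosed)
  have hFinv : ∀ k, F k = Sstep sys k (F (k + 1)) := by
    intro k
    apply Set.Subset.antisymm
    · intro x hx
      by_contra hxmem
      have hstep : ∀ i ∈ sys.I (k + 1), ∃ n,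
          SiterN sys (k + 1) n X ∩ sys.f i ⁻¹' {x} = ∅ := by
        intro i hi
        by_contra hcon
        push_neg at hcon
        have hne : ∀ n, (SiterN sys (k + 1) n X ∩ sys.f i ⁻¹' {x}).Nonempty := hcon
        have hclosed : ∀ n, IsClosed (SiterN sys (k + 1) n X ∩ sys.f i ⁻¹' {x}) :=
          fun n => (hAcomp n (k + 1)).isClosed.inter (isClosed_singleton.preimage (hcont i))
        obtain ⟨a, ha⟩ := IsCompact.nonempty_iInter_of_sequence_nonempty_isCompact_isClosed _
          (fun n => Set.inter_subset_inter_left _ (hAanti (k + 1) (Nat.le_succ n)))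
          hne ((hAcomp 0 (k + 1)).inter_right (isClosed_singleton.preimage (hcont i)))
          hclosed
        simp only [Set.mem_iInter, Set.mem_inter_iff, Set.mem_preimage,
          Set.mem_singleton_iff] at ha
        apply hxmem
        have haF : a ∈ F (k + 1) := Set.mem_iInter.2 fun n => (ha n).1
        simp only [Sstep, Set.mem_iUnion]
        exact ⟨i, hi, a, haF, (ha 0).2⟩
      choose! g hg using hstep
      set N := (sys.I (k + 1)).sup g with hNdef
      have hxN : x ∈ SiterN sys k (N + 1) X := Set.mem_iInter.1 hx (N + 1)
      have hxN' : x ∈ Sstep sys k (SiterN sys (k + 1) N X) := hxN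
      simp only [Sstep, Set.mem_iUnion] at hxN'
      obtain ⟨i, hi, a, haN, hfa⟩ := hxN'
      have ha' : a ∈ SiterN sys (k + 1) (g i) X := hAanti (k + 1) (Finset.le_sup hi) haN
      have : a ∈ SiterN sys (k + 1) (g i) X ∩ sys.f i ⁻¹' {x} := ⟨ha', by simp [hfa]⟩
      rw [hg i hi] at this
      exact this
    · intro x hx
      apply Set.mem_iInter.2
      intro n
      cases n with
      | zero => exact hSstepX k (hFX (k + 1)) hx
      | succ n =>
        show x ∈ Sstep sys k (SiterN sys (k + 1) n X)
        exact Sstep_mono sys (Set.iInter_subset _ n) k hx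
  have hFiter : ∀ (n k : ℕ), F k = SiterN sys k n (F (k + n)) := by
    intro n
    induction n with
    | zero => intro k; rfl
    | succ n ih =>
      intro k
      show F k = Sstep sys k (SiterN sys (k + 1) n (F (k + (n + 1))))
      rw [hFinv k, ih (k + 1), show k + 1 + n = k + (n + 1) from by omega]
  refine ⟨F, hFcomp, ?_, hFinv, ?_⟩
  · exact (isBounded_closedBall).subset (Set.iUnion_subset fun k => hFX k)
  · intro B hB k
    rcases B.eq_empty_or_nonempty with rfl | hBne
    · have h0 : semidist (∅ : Set (EuclideanSpace ℝ (Fin d))) (F k) = 0 := by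
        simp [semidist]
      simp only [SiterN_empty, h0]
      exact tendsto_const_nhds
    · obtain ⟨R', hR'sub⟩ := hB.subset_closedBall (0 : EuclideanSpace ℝ (Fin d))
      set C : ℝ≥0∞ := ENNReal.ofReal (R' + R) with hCdef
      have hbound : ∀ n, semidist B (F (k + n)) ≤ C := by
        intro n
        apply iSup₂_le
        intro x hx
        obtain ⟨y, hy⟩ := hFne (k + n)
        refine (EMetric.infEdist_le_edist_of_mem hy).trans ?_
        rw [edist_dist]
        apply ENNReal.ofReal_le_ofReal
        have h1 : dist x 0 ≤ R' := mem_closedBall.1 (hR'sub hx)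
        have h2 : dist y 0 ≤ R := mem_closedBall.1 (hFX _ hy)
        calc dist x y ≤ dist x 0 + dist 0 y := dist_triangle _ _ _
          _ ≤ R' + R := add_le_add h1 (by rwa [dist_comm])
      have hmain : ∀ n, semidist (SiterN sys k n B) (F k) ≤ (σN : ℝ≥0∞) ^ n * C := by
        intro n
        calc semidist (SiterN sys k n B) (F k)
            = semidist (SiterN sys k n B) (SiterN sys k n (F (k + n))) := by
              rw [← hFiter n k]
          _ ≤ (σN : ℝ≥0∞) ^ n * semidist B (F (k + n)) :=
              semidist_SiterN_le sys σN hσN0 hlip n k B (F (k + n))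
          _ ≤ (σN : ℝ≥0∞) ^ n * C := mul_le_mul_right (hbound n) _
      have hlim : Tendsto (fun n : ℕ => (σN : ℝ≥0∞) ^ n * C) atTop (nhds 0) := by
        have := ENNReal.Tendsto.mul_const
          (ENNReal.tendsto_pow_atTop_nhds_zero_of_lt_one hσN1)
          (b := C) (Or.inr ENNReal.ofReal_ne_top)
        simpa using this
      have hcomp := hlim.comp (tendsto_sub_atTop_nat k)
      exact tendsto_of_tendsto_of_tendsto_of_le_of_le tendsto_const_nhds hcomp
        (fun l => zero_le) (fun l => hmain (l - k))
end

section
/- If a non-autonomous iterated function system satisfies the generalised Moran open-set condition and satisfies sup{|b_i| : i ∈ ℕ} < ∞ and sup{σ_i : i ∈ ℕ} < 1 (where b_i is the fixed point of f_i), then its pullback attractor satisfies F^k ⊆ closure(U^k) for every k ∈ ℕ₀. -/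
open Set Metric Filter Bornology MeasureTheory
open scoped ENNReal NNReal

variable {E : Type*} [MetricSpace E]

/-- The generalised Moran open-set condition: uniformly bounded nonempty open
sets `U^k` with `S^k(U^{k+1}) ⊆ U^k`, `f_i(U^k) ∩ f_j(U^k) = ∅` for distinct
`i, j ∈ I_k`, and `λ(U^k) ≥ ε₀ > 0`. -/
def GenMoranOSC {d : ℕ} (sys : NAIFS (EuclideanSpace ℝ (Fin d)))
    (U : ℕ → Set (EuclideanSpace ℝ (Fin d))) (ε₀ : ℝ) : Prop :=
  (∀ k, (U k).Nonempty) ∧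
  (∀ k, IsOpen (U k)) ∧
  IsBounded (⋃ k, U k) ∧
  (∀ k, Sstep sys k (U (k + 1)) ⊆ U k) ∧
  (∀ k, 1 ≤ k → ∀ i ∈ sys.I k, ∀ j ∈ sys.I k, i ≠ j →
    sys.f i '' U k ∩ sys.f j '' U k = ∅) ∧
  0 < ε₀ ∧
  (∀ k, ENNReal.ofReal ε₀ ≤ volume (U k))

/-- Under the generalised Moran open-set condition, uniformly
bounded fixed points, and `sup σ_i < 1`, the pullback attractor satisfies
`F^k ⊆ closure (U^k)` for every `k`. -/
theorem attractor_subset_closure_openSets {d : ℕ}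
    (sys : NAIFS (EuclideanSpace ℝ (Fin d)))
    (U : ℕ → Set (EuclideanSpace ℝ (Fin d))) (ε₀ : ℝ)
    (hosc : GenMoranOSC sys U ε₀)
    (b : ℕ → EuclideanSpace ℝ (Fin d))
    (hb : ∀ i, sys.f i (b i) = b i)
    (hM : ∃ M : ℝ, ∀ i, ‖b i‖ ≤ M)
    (hσ : sSup (Set.range sys.σ) < 1)
    (F : ℕ → Set (EuclideanSpace ℝ (Fin d)))
    (hF : IsPullbackAttractor sys F) :
    ∀ k, F k ⊆ closure (U k) := by
  obtain ⟨hUne, hUopen, hUbdd, hUnest, -, -, -⟩ := hosc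
  obtain ⟨-, hFbdd, hFinv, -⟩ := hF
  set s := sSup (Set.range sys.σ) with hs
  have hbdd : BddAbove (Set.range sys.σ) :=
    ⟨1, by rintro _ ⟨i, rfl⟩; exact (sys.σ_lt_one i).le⟩
  have hσle : ∀ i, sys.σ i ≤ s := fun i => le_csSup hbdd ⟨i, rfl⟩
  have hs0 : 0 ≤ s := le_trans (sys.σ_pos 0).le (hσle 0)
  obtain ⟨R, hR⟩ := (hFbdd.union hUbdd).subset_closedBall 0
  have hR0 : 0 ≤ R := by
    obtain ⟨u, hu⟩ := hUne 0
    have : u ∈ closedBall 0 R := hR (Or.inr (mem_iUnion.2 ⟨0, hu⟩))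
    have := mem_closedBall.1 this
    exact le_trans dist_nonneg this
  -- F k = S^{k,k+n}(F (k+n))
  have hA : ∀ n k, F k = SiterN sys k n (F (k + n)) := by
    intro n
    induction n with
    | zero => intro k; simp [SiterN]
    | succ n ih =>
      intro k
      rw [hFinv k, ih (k + 1)]
      have h1 : k + 1 + n = k + (n + 1) := by ring
      rw [h1]; rfl
  -- S^{k,k+n}(U (k+n)) ⊆ U k
  have hB : ∀ n k, SiterN sys k n (U (k + n)) ⊆ U k := by
    intro n
    induction n with
    | zero => intro k; simp [SiterN]
    | succ n ih =>
      intro k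
      show Sstep sys k (SiterN sys (k + 1) n (U (k + (n + 1)))) ⊆ U k
      refine subset_trans ?_ (hUnest k)
      unfold Sstep
      refine iUnion₂_mono fun i _ => image_mono ?_
      have h1 : k + (n + 1) = k + 1 + n := by ring
      rw [h1]; exact ih (k + 1)
  -- contraction estimate
  have hC : ∀ (n k : ℕ) (A B : Set (EuclideanSpace ℝ (Fin d))) (C : ℝ),
      (∀ a ∈ A, ∃ b' ∈ B, dist a b' ≤ C) →
      ∀ x ∈ SiterN sys k n A, ∃ y ∈ SiterN sys k n B, dist x y ≤ s ^ n * C := by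
    intro n
    induction n with
    | zero => intro k A B C h x hx; simpa [SiterN] using h x hx
    | succ n ih =>
      intro k A B C h x hx
      have hx' : x ∈ ⋃ i ∈ sys.I (k + 1), sys.f i '' (SiterN sys (k + 1) n A) := hx
      obtain ⟨i, hi, a', ha', rfl⟩ := by
        simpa [Sstep] using hx'
      obtain ⟨b', hb', hd⟩ := ih (k + 1) A B C h a' ha'
      refine ⟨sys.f i b', ?_, ?_⟩
      · show sys.f i b' ∈ ⋃ i ∈ sys.I (k + 1), sys.f i '' (SiterN sys (k + 1) n B)
        exact mem_iUnion₂.2 ⟨i, hi, mem_image_of_mem _ hb'⟩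
      · calc dist (sys.f i a') (sys.f i b') ≤ sys.σ i * dist a' b' := sys.contract i a' b'
          _ ≤ s * (s ^ n * C) := mul_le_mul (hσle i) hd dist_nonneg hs0
          _ = s ^ (n + 1) * C := by ring
  intro k x hx
  rw [Metric.mem_closure_iff]
  intro ε hε
  have h2R : (0 : ℝ) < 2 * R + 1 := by linarith
  obtain ⟨n, hn⟩ := exists_pow_lt_of_lt_one (div_pos hε h2R) hσ
  have hstep : ∀ a ∈ F (k + n), ∃ b' ∈ U (k + n), dist a b' ≤ 2 * R := by
    intro a ha
    obtain ⟨u, hu⟩ := hUne (k + n)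
    refine ⟨u, hu, ?_⟩
    have ha' : a ∈ closedBall 0 R := hR (Or.inl (mem_iUnion.2 ⟨k + n, ha⟩))
    have hu' : u ∈ closedBall 0 R := hR (Or.inr (mem_iUnion.2 ⟨k + n, hu⟩))
    calc dist a u ≤ dist a 0 + dist 0 u := dist_triangle _ _ _
      _ ≤ R + R := add_le_add (mem_closedBall.1 ha') (by rw [dist_comm]; exact mem_closedBall.1 hu')
      _ = 2 * R := by ring
  have hx' : x ∈ SiterN sys k n (F (k + n)) := (hA n k) ▸ hx
  obtain ⟨y, hy, hdxy⟩ := hC n k (F (k + n)) (U (k + n)) (2 * R) hstep x hx'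
  refine ⟨y, hB n k hy, lt_of_le_of_lt hdxy ?_⟩
  calc s ^ n * (2 * R) ≤ s ^ n * (2 * R + 1) :=
        mul_le_mul_of_nonneg_left (by linarith) (pow_nonneg hs0 n)
    _ < (ε / (2 * R + 1)) * (2 * R + 1) := by
        exact mul_lt_mul_of_pos_right hn h2R
    _ = ε := div_mul_cancel₀ ε (ne_of_gt h2R)
end

section
/- If {F^k} is the pullback attractor of a non-autonomous iterated function system of similarities satisfying the generalised Moran open-set condition, if σ_i = c_k for all i ∈ I_k and all k ∈ ℕ (i.e. all contraction ratios coincide within each step of the iteration), and if there exists N > 0 such that card(I_k) ≤ N for all k ∈ ℕ, then each set F^k is equi-homogeneous. -/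
open Set Metric Filter Bornology MeasureTheory
open scoped ENNReal NNReal

variable {E : Type*} [MetricSpace E]

/-- `coverNumber F δ` : the minimum number of closed `δ`-balls with centres in
`F` needed to cover `F` (`∞` if there is no finite such cover). -/
noncomputable def coverNumber {X : Type*} [MetricSpace X] (F : Set X) (δ : ℝ) : ℝ≥0∞ :=
  ⨅ (t : Finset X) (_ : (t : Set X) ⊆ F) (_ : F ⊆ ⋃ x ∈ t, closedBall x δ),
    (t.card : ℝ≥0∞)

/-- `F` is equi-homogeneous: for every `δ₀ > 0` there are `M ≥ 1` and
`c₁, c₂ > 0` with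
`sup_{x∈F} N(B_δ(x) ∩ F, ρ) ≤ M inf_{x∈F} N(B_{c₁δ}(x) ∩ F, c₂ρ)`
for all `0 < ρ < δ ≤ δ₀`. -/
def EquiHomogeneous {X : Type*} [MetricSpace X] (F : Set X) : Prop :=
  ∀ δ₀ : ℝ, 0 < δ₀ → ∃ M c₁ c₂ : ℝ, 1 ≤ M ∧ 0 < c₁ ∧ 0 < c₂ ∧
    ∀ δ ρ : ℝ, 0 < ρ → ρ < δ → δ ≤ δ₀ →
      (⨆ x ∈ F, coverNumber (closedBall x δ ∩ F) ρ) ≤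
        ENNReal.ofReal M * (⨅ x ∈ F, coverNumber (closedBall x (c₁ * δ) ∩ F) (c₂ * ρ))


open scoped RealInnerProductSpace Pointwise

section CoverLemmas


variable {X : Type*} [MetricSpace X]

lemma coverNumber_le_card {F : Set X} {δ : ℝ} {t : Finset X}
    (h1 : (t : Set X) ⊆ F) (h2 : F ⊆ ⋃ x ∈ t, closedBall x δ) :
    coverNumber F δ ≤ t.card := by
  unfold coverNumber
  exact iInf_le_of_le t (iInf_le_of_le h1 (iInf_le_of_le h2 le_rfl))

lemma le_coverNumber {F : Set X} {δ : ℝ} {a : ℝ≥0∞}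
    (h : ∀ t : Finset X, (t : Set X) ⊆ F → F ⊆ ⋃ x ∈ t, closedBall x δ →
      a ≤ t.card) : a ≤ coverNumber F δ := by
  unfold coverNumber
  exact le_iInf fun t => le_iInf fun h1 => le_iInf fun h2 => h t h1 h2

lemma coverNumber_empty (δ : ℝ) : coverNumber (∅ : Set X) δ = 0 := by
  refine le_antisymm ?_ (zero_le)
  simpa using coverNumber_le_card (F := (∅ : Set X)) (δ := δ) (t := ∅)
    (by simp) (by simp)

lemma exists_cover {F : Set X} {δ : ℝ} (h : coverNumber F δ ≠ ⊤) :
    ∃ t : Finset X, (t : Set X) ⊆ F ∧ (F ⊆ ⋃ x ∈ t, closedBall x δ) ∧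
      (t.card : ℝ≥0∞) ≤ coverNumber F δ := by
  classical
  have hex : ∃ t : Finset X, (t : Set X) ⊆ F ∧ F ⊆ ⋃ x ∈ t, closedBall x δ := by
    by_contra hc
    push_neg at hc
    apply h
    rw [eq_top_iff]
    refine le_coverNumber fun t h1 h2 => absurd h2 (hc t h1)
  obtain ⟨t0, ht01, ht02⟩ := hex
  have hPex : ∃ n : ℕ, ∃ t : Finset X, (t : Set X) ⊆ F ∧
      (F ⊆ ⋃ x ∈ t, closedBall x δ) ∧ t.card = n := ⟨t0.card, t0, ht01, ht02, rfl⟩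
  obtain ⟨t, h1, h2, hcard⟩ := Nat.find_spec hPex
  refine ⟨t, h1, h2, ?_⟩
  rw [hcard]
  refine le_coverNumber fun s hs1 hs2 => ?_
  exact_mod_cast Nat.cast_le.mpr (Nat.find_min' hPex ⟨s, hs1, hs2, rfl⟩)

lemma coverNumber_le_of_subset {S A : Set X} {ρ : ℝ} (hSA : S ⊆ A) :
    coverNumber S (2 * ρ) ≤ coverNumber A ρ := by
  classical
  by_cases h : coverNumber A ρ = ⊤
  · rw [h]; exact le_top
  obtain ⟨t, h1, h2, h3⟩ := exists_cover h
  set g : X → X := fun c =>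
    if hc : (closedBall c ρ ∩ S).Nonempty then hc.choose else c with hg
  set t' : Finset X := (t.filter fun c => (closedBall c ρ ∩ S).Nonempty).image g with ht'
  have hsub : (t' : Set X) ⊆ S := by
    intro y hy
    simp only [ht', Finset.coe_image, Set.mem_image, Finset.mem_coe,
      Finset.mem_filter] at hy
    obtain ⟨c, ⟨_, hcne⟩, rfl⟩ := hy
    have : g c = hcne.choose := by simp [hg, hcne]
    rw [this]
    exact hcne.choose_spec.2
  have hcov : S ⊆ ⋃ x ∈ t', closedBall x (2 * ρ) := by
    intro s hs
    obtain ⟨c, hct, hsc⟩ := Set.mem_iUnion₂.mp (h2 (hSA hs))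
    have hcne : (closedBall c ρ ∩ S).Nonempty := ⟨s, hsc, hs⟩
    have hgc : g c = hcne.choose := by simp [hg, hcne]
    have hgmem : g c ∈ closedBall c ρ ∩ S := by rw [hgc]; exact hcne.choose_spec
    refine Set.mem_iUnion₂.mpr ⟨g c, ?_, ?_⟩
    · exact Finset.mem_image_of_mem g (Finset.mem_filter.mpr ⟨hct, hcne⟩)
    · have h1' : dist s c ≤ ρ := mem_closedBall.mp hsc
      have h2' : dist (g c) c ≤ ρ := mem_closedBall.mp hgmem.1
      have : dist s (g c) ≤ dist s c + dist c (g c) := dist_triangle _ _ _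
      rw [dist_comm c (g c)] at this
      exact mem_closedBall.mpr (by linarith)
  refine le_trans (coverNumber_le_card hsub hcov) (le_trans ?_ h3)
  exact_mod_cast Nat.cast_le.mpr (le_trans (Finset.card_image_le) (Finset.card_filter_le _ _))

lemma coverNumber_biUnion_le {ι : Type*} (s : Finset ι) (A : ι → Set X) (ρ : ℝ) :
    coverNumber (⋃ i ∈ s, A i) ρ ≤ ∑ i ∈ s, coverNumber (A i) ρ := by
  classical
  by_cases h : ∃ i ∈ s, coverNumber (A i) ρ = ⊤
  · obtain ⟨i, hi, hT⟩ := h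
    have : ∑ i ∈ s, coverNumber (A i) ρ = ⊤ := ENNReal.sum_eq_top.mpr ⟨i, hi, hT⟩
    rw [this]; exact le_top
  push_neg at h
  choose t ht1 ht2 ht3 using fun (i : {i // i ∈ s}) => exists_cover (h i.1 i.2)
  set T : Finset X := s.attach.biUnion (fun i => t i) with hT
  have hsub : (T : Set X) ⊆ ⋃ i ∈ s, A i := by
    intro y hy
    simp only [hT, Finset.coe_biUnion, Set.mem_iUnion, Finset.mem_coe,
      Finset.mem_attach, true_and] at hy
    obtain ⟨i, _, hyi⟩ := hy
    exact Set.mem_iUnion₂.mpr ⟨i.1, i.2, ht1 i hyi⟩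
  have hcov : (⋃ i ∈ s, A i) ⊆ ⋃ x ∈ T, closedBall x ρ := by
    intro z hz
    obtain ⟨i, hi, hzi⟩ := Set.mem_iUnion₂.mp hz
    obtain ⟨c, hct, hzc⟩ := Set.mem_iUnion₂.mp (ht2 ⟨i, hi⟩ hzi)
    exact Set.mem_iUnion₂.mpr ⟨c, Finset.mem_biUnion.mpr ⟨⟨i, hi⟩, Finset.mem_attach _ _, hct⟩, hzc⟩
  refine le_trans (coverNumber_le_card hsub hcov) ?_
  calc (T.card : ℝ≥0∞) ≤ ∑ i ∈ s.attach, ((t i).card : ℝ≥0∞) := by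
        exact_mod_cast Nat.cast_le.mpr (Finset.card_biUnion_le)
    _ ≤ ∑ i ∈ s.attach, coverNumber (A i.1) ρ := Finset.sum_le_sum fun i _ => ht3 i
    _ = ∑ i ∈ s, coverNumber (A i) ρ := by
        rw [← Finset.sum_attach s (fun i => coverNumber (A i) ρ)]

lemma coverNumber_image {Y : Type*} [MetricSpace Y] {f : X → Y} {σ : ℝ}
    (hσ : 0 < σ) (hf : ∀ x y, dist (f x) (f y) = σ * dist x y) (A : Set X) (ρ : ℝ) :
    coverNumber (f '' A) (σ * ρ) = coverNumber A ρ := by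
  classical
  rcases A.eq_empty_or_nonempty with hA | hA
  · simp [hA, coverNumber_empty]
  obtain ⟨a₀, ha₀⟩ := hA
  refine le_antisymm ?_ ?_
  · refine le_coverNumber fun t h1 h2 => ?_
    refine le_trans (coverNumber_le_card (t := t.image f) ?_ ?_) ?_
    · intro y hy
      simp only [Finset.coe_image, Set.mem_image, Finset.mem_coe] at hy
      obtain ⟨x, hx, rfl⟩ := hy
      exact ⟨x, h1 hx, rfl⟩
    · rintro y ⟨a, ha, rfl⟩
      obtain ⟨c, hct, hac⟩ := Set.mem_iUnion₂.mp (h2 ha)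
      refine Set.mem_iUnion₂.mpr ⟨f c, Finset.mem_image_of_mem f hct, ?_⟩
      rw [mem_closedBall, hf]
      exact mul_le_mul_of_nonneg_left (mem_closedBall.mp hac) hσ.le
    · exact_mod_cast Nat.cast_le.mpr Finset.card_image_le
  · refine le_coverNumber fun t' h1 h2 => ?_
    set g : Y → X := fun c => if hc : ∃ a ∈ A, f a = c then hc.choose else a₀ with hgdef
    have hgA : ∀ c ∈ t', g c ∈ A ∧ f (g c) = c := by
      intro c hct
      have : c ∈ f '' A := h1 hct
      obtain ⟨a, ha, rfl⟩ := this
      have hex : ∃ a' ∈ A, f a' = f a := ⟨a, ha, rfl⟩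
      have : g (f a) = hex.choose := by simp [hgdef, hex]
      rw [this]
      exact ⟨hex.choose_spec.1, hex.choose_spec.2⟩
    refine le_trans (coverNumber_le_card (t := t'.image g) ?_ ?_) ?_
    · intro x hx
      simp only [Finset.coe_image, Set.mem_image, Finset.mem_coe] at hx
      obtain ⟨c, hc, rfl⟩ := hx
      exact (hgA c hc).1
    · intro a ha
      obtain ⟨c, hct, hac⟩ := Set.mem_iUnion₂.mp (h2 ⟨a, ha, rfl⟩)
      refine Set.mem_iUnion₂.mpr ⟨g c, Finset.mem_image_of_mem g hct, ?_⟩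
      rw [mem_closedBall] at hac ⊢
      have : dist (f a) (f (g c)) = σ * dist a (g c) := hf _ _
      rw [(hgA c hct).2] at this
      nlinarith [dist_nonneg (x := a) (y := g c)]
    · exact_mod_cast Nat.cast_le.mpr Finset.card_image_le

end CoverLemmas

section Sim


variable {d : ℕ}

local notation "E" => EuclideanSpace ℝ (Fin d)

lemma sim_exists (f : E → E) {σ : ℝ} (hσ : 0 < σ)
    (h : ∀ x y, dist (f x) (f y) = σ * dist x y) :
    ∃ L : E ≃ₗᵢ[ℝ] E, ∀ x, f x = f 0 + σ • L x := by
  set g : E → E := fun x => σ⁻¹ • (f x - f 0) with hg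
  have hgd : ∀ x y, dist (g x) (g y) = dist x y := by
    intro x y
    have heq : g x - g y = σ⁻¹ • (f x - f y) := by
      simp only [hg, ← smul_sub]
      congr 1
      abel
    rw [dist_eq_norm, heq, norm_smul, Real.norm_eq_abs, abs_of_pos (inv_pos.mpr hσ),
      ← dist_eq_norm, h, ← mul_assoc, inv_mul_cancel₀ hσ.ne', one_mul]
  have hg0 : g 0 = 0 := by simp [hg]
  have hgn : ∀ x, ‖g x‖ = ‖x‖ := by
    intro x
    have := hgd x 0
    rwa [dist_eq_norm, dist_eq_norm, hg0, sub_zero, sub_zero] at this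
  have hgi : ∀ x y, ⟪g x, g y⟫ = ⟪x, y⟫ := by
    intro x y
    rw [real_inner_eq_norm_mul_self_add_norm_mul_self_sub_norm_sub_mul_self_div_two,
      real_inner_eq_norm_mul_self_add_norm_mul_self_sub_norm_sub_mul_self_div_two x y,
      hgn, hgn]
    have : ‖g x - g y‖ = ‖x - y‖ := by rw [← dist_eq_norm, ← dist_eq_norm, hgd]
    rw [this]
  have hadd : ∀ x y, g (x + y) = g x + g y := by
    intro x y
    have hz : ⟪g (x + y) - (g x + g y), g (x + y) - (g x + g y)⟫ = 0 := by
      simp only [inner_sub_left, inner_sub_right, inner_add_left, inner_add_right, hgi]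
      ring
    have h0 := inner_self_eq_zero.mp hz
    rw [sub_eq_zero] at h0
    exact h0
  have hsmul : ∀ (c : ℝ) (x : E), g (c • x) = c • g x := by
    intro c x
    have hz : ⟪g (c • x) - c • g x, g (c • x) - c • g x⟫ = 0 := by
      simp only [inner_sub_left, inner_sub_right, real_inner_smul_left,
        real_inner_smul_right, hgi]
      ring
    have h0 := inner_self_eq_zero.mp hz
    rw [sub_eq_zero] at h0
    exact h0
  set L0 : E →ₗ[ℝ] E :=
    { toFun := g
      map_add' := hadd
      map_smul' := hsmul } with hL0
  have hinj : Function.Injective L0 := by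
    intro x y hxy
    have hgxy : g x = g y := hxy
    have : dist x y = 0 := by rw [← hgd, hgxy, dist_self]
    exact dist_eq_zero.mp this
  have hsurj := LinearMap.injective_iff_surjective.mp hinj
  refine ⟨⟨LinearEquiv.ofBijective L0 ⟨hinj, hsurj⟩, fun x => hgn x⟩, fun x => ?_⟩
  show f x = f 0 + σ • g x
  have : σ • g x = f x - f 0 := by
    rw [hg]
    simp only []
    rw [smul_smul, mul_inv_cancel₀ hσ.ne', one_smul]
  rw [this]
  abel

lemma sim_surjective (f : E → E) {σ : ℝ} (hσ : 0 < σ)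
    (h : ∀ x y, dist (f x) (f y) = σ * dist x y) : Function.Surjective f := by
  obtain ⟨L, hL⟩ := sim_exists f hσ h
  intro y
  refine ⟨L.symm (σ⁻¹ • (y - f 0)), ?_⟩
  rw [hL, LinearIsometryEquiv.apply_symm_apply, smul_smul, mul_inv_cancel₀ hσ.ne',
    one_smul]
  abel

lemma sim_image_closedBall (f : E → E) {σ : ℝ} (hσ : 0 < σ)
    (h : ∀ x y, dist (f x) (f y) = σ * dist x y) (z : E) (r : ℝ) :
    f '' closedBall z r = closedBall (f z) (σ * r) := by
  ext y
  constructor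
  · rintro ⟨a, ha, rfl⟩
    rw [mem_closedBall] at ha ⊢
    rw [h]
    exact mul_le_mul_of_nonneg_left ha hσ.le
  · intro hy
    obtain ⟨a, rfl⟩ := sim_surjective f hσ h y
    rw [mem_closedBall, h] at hy
    exact ⟨a, mem_closedBall.mpr (le_of_mul_le_mul_left hy hσ), rfl⟩

lemma sim_isOpenMap (f : E → E) {σ : ℝ} (hσ : 0 < σ)
    (h : ∀ x y, dist (f x) (f y) = σ * dist x y) : IsOpenMap f := by
  obtain ⟨L, hL⟩ := sim_exists f hσ h
  have hf : f = (fun y => f 0 + y) ∘ (fun y : E => σ • y) ∘ L := funext fun x => hL x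
  rw [hf]
  exact ((Homeomorph.addLeft (f 0)).isOpenMap.comp (isOpenMap_smul₀ hσ.ne')).comp
    L.toHomeomorph.isOpenMap

lemma sim_volume (f : E → E) {σ : ℝ} (hσ : 0 < σ)
    (h : ∀ x y, dist (f x) (f y) = σ * dist x y) (s : Set E) (hs : MeasurableSet s) :
    volume (f '' s) = ENNReal.ofReal (σ ^ d) * volume s := by
  obtain ⟨L, hL⟩ := sim_exists f hσ h
  have hf : f = (fun y => f 0 + y) ∘ (fun y : E => σ • y) ∘ L := funext fun x => hL x
  rw [hf, Set.image_comp, Set.image_comp]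
  have h1 : (L : E → E) '' s = L.symm ⁻¹' s :=
    congrFun (Set.image_eq_preimage_of_inverse (fun x => L.symm_apply_apply x)
      (fun x => L.apply_symm_apply x)) s
  have hvol1 : volume ((L : E → E) '' s) = volume s := by
    rw [h1]
    exact (L.symm.measurePreserving).measure_preimage hs.nullMeasurableSet
  have hmeas1 : MeasurableSet ((L : E → E) '' s) := by
    rw [h1]; exact L.symm.continuous.measurable hs
  have h2 : (fun y : E => σ • y) '' ((L : E → E) '' s) = σ • ((L : E → E) '' s) := by
    ext y; simp [Set.mem_smul_set]
  rw [h2]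
  have h3 : ∀ B : Set E, (fun y => f 0 + y) '' B = (fun y => -f 0 + y) ⁻¹' B := by
    intro B
    exact congrFun (Set.image_eq_preimage_of_inverse (fun x => by abel) (fun x => by abel)) B
  rw [h3, measure_preimage_add, Measure.addHaar_smul_of_nonneg volume hσ.le, hvol1,
    finrank_euclideanSpace_fin]

end Sim

section Words

variable {E : Type*} [MetricSpace E]

/-- Composition of the maps along a word. -/
def wordComp (sys : NAIFS E) : List ℕ → E → E
  | [] => id
  | i :: t => sys.f i ∘ wordComp sys t

/-- The product of the ratios along a word. -/
def wordRatio (sys : NAIFS E) (w : List ℕ) : ℝ := (w.map sys.σ).prod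

/-- The admissible words of length `n` starting at level `k`. -/
def words (sys : NAIFS E) : ℕ → ℕ → Finset (List ℕ)
  | _, 0 => {[]}
  | k, n + 1 => (sys.I (k + 1)).biUnion fun i => (words sys (k + 1) n).image (i :: ·)

lemma mem_words_zero {sys : NAIFS E} {k : ℕ} {w : List ℕ} :
    w ∈ words sys k 0 ↔ w = [] := by simp [words]

lemma mem_words_succ {sys : NAIFS E} {k n : ℕ} {w : List ℕ} :
    w ∈ words sys k (n + 1) ↔
      ∃ i ∈ sys.I (k + 1), ∃ t ∈ words sys (k + 1) n, w = i :: t := by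
  simp only [words, Finset.mem_biUnion, Finset.mem_image]
  constructor
  · rintro ⟨i, hi, t, ht, rfl⟩; exact ⟨i, hi, t, ht, rfl⟩
  · rintro ⟨i, hi, t, ht, rfl⟩; exact ⟨i, hi, t, ht, rfl⟩

lemma words_nonempty (sys : NAIFS E) : ∀ n k, (words sys k n).Nonempty := by
  intro n
  induction n with
  | zero => intro k; exact ⟨[], by simp [words]⟩
  | succ n ih =>
    intro k
    obtain ⟨i, hi⟩ := sys.I_nonempty (k + 1) (Nat.le_add_left 1 k)
    obtain ⟨t, ht⟩ := ih (k + 1)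
    exact ⟨i :: t, mem_words_succ.mpr ⟨i, hi, t, ht, rfl⟩⟩

lemma wordComp_dist (sys : NAIFS E)
    (hsim : ∀ i x y, dist (sys.f i x) (sys.f i y) = sys.σ i * dist x y) :
    ∀ (w : List ℕ) (x y : E),
      dist (wordComp sys w x) (wordComp sys w y) = wordRatio sys w * dist x y := by
  intro w
  induction w with
  | nil => intro x y; simp [wordComp, wordRatio]
  | cons i t ih =>
    intro x y
    show dist (sys.f i (wordComp sys t x)) (sys.f i (wordComp sys t y)) = _
    rw [hsim, ih]
    simp [wordRatio, mul_assoc]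

lemma wordRatio_pos (sys : NAIFS E) (w : List ℕ) : 0 < wordRatio sys w := by
  induction w with
  | nil => simp [wordRatio]
  | cons i t ih =>
    have : wordRatio sys (i :: t) = sys.σ i * wordRatio sys t := by
      simp [wordRatio]
    rw [this]
    exact mul_pos (sys.σ_pos i) ih

lemma wordComp_injective (sys : NAIFS E)
    (hsim : ∀ i x y, dist (sys.f i x) (sys.f i y) = sys.σ i * dist x y)
    (w : List ℕ) : Function.Injective (wordComp sys w) := by
  intro x y hxy
  have := wordComp_dist sys hsim w x y
  rw [hxy, dist_self] at this
  have := (mul_eq_zero.mp this.symm).resolve_left (wordRatio_pos sys w).ne'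
  exact dist_eq_zero.mp this

lemma wordComp_append (sys : NAIFS E) (a b : List ℕ) :
    wordComp sys (a ++ b) = wordComp sys a ∘ wordComp sys b := by
  induction a with
  | nil => rfl
  | cons i t ih =>
    show sys.f i ∘ wordComp sys (t ++ b) = (sys.f i ∘ wordComp sys t) ∘ wordComp sys b
    rw [ih, Function.comp_assoc]

lemma mem_words_snoc {sys : NAIFS E} :
    ∀ (n k : ℕ) (w : List ℕ), w ∈ words sys k (n + 1) ↔
      ∃ t ∈ words sys k n, ∃ i ∈ sys.I (k + n + 1), w = t ++ [i] := by
  intro n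
  induction n with
  | zero =>
    intro k w
    rw [mem_words_succ]
    constructor
    · rintro ⟨i, hi, t, ht, rfl⟩
      rw [mem_words_zero] at ht
      subst ht
      exact ⟨[], by simp [words], i, by simpa using hi, rfl⟩
    · rintro ⟨t, ht, i, hi, rfl⟩
      rw [mem_words_zero] at ht
      subst ht
      exact ⟨i, by simpa using hi, [], by simp [words], rfl⟩
  | succ n ih =>
    intro k w
    rw [mem_words_succ]
    constructor
    · rintro ⟨i, hi, t, ht, rfl⟩
      obtain ⟨t', ht', j, hj, rfl⟩ := (ih (k + 1) t).mp ht
      refine ⟨i :: t', mem_words_succ.mpr ⟨i, hi, t', ht', rfl⟩, j, ?_, rfl⟩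
      · rwa [show k + (n + 1) + 1 = k + 1 + n + 1 by omega]
    · rintro ⟨t, ht, j, hj, rfl⟩
      rw [mem_words_succ] at ht
      obtain ⟨i, hi, t', ht', rfl⟩ := ht
      refine ⟨i, hi, t' ++ [j], (ih (k + 1) (t' ++ [j])).mpr ⟨t', ht', j, ?_, rfl⟩, rfl⟩
      · rwa [show k + 1 + n + 1 = k + (n + 1) + 1 by omega]

lemma wordRatio_eq {sys : NAIFS E} {c : ℕ → ℝ}
    (hc : ∀ k, 1 ≤ k → ∀ i ∈ sys.I k, sys.σ i = c k) :
    ∀ (n k : ℕ) (w : List ℕ), w ∈ words sys k n →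
      wordRatio sys w = ∏ j ∈ Finset.range n, c (k + j + 1) := by
  intro n
  induction n with
  | zero =>
    intro k w hw
    rw [mem_words_zero] at hw
    subst hw
    simp [wordRatio]
  | succ n ih =>
    intro k w hw
    obtain ⟨i, hi, t, ht, rfl⟩ := mem_words_succ.mp hw
    have h1 : wordRatio sys (i :: t) = sys.σ i * wordRatio sys t := by simp [wordRatio]
    rw [h1, hc (k + 1) (Nat.le_add_left 1 k) i hi, ih (k + 1) t ht,
      Finset.prod_range_succ' (fun j => c (k + j + 1)) n]
    rw [mul_comm]
    congr 1
    · exact Finset.prod_congr rfl fun j _ => by congr 1; omega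

lemma SiterN_eq_iUnion (sys : NAIFS E) :
    ∀ (n k : ℕ) (B : Set E),
      SiterN sys k n B = ⋃ w ∈ words sys k n, wordComp sys w '' B := by
  intro n
  induction n with
  | zero => intro k B; simp [SiterN, words, wordComp]
  | succ n ih =>
    intro k B
    show Sstep sys k (SiterN sys (k + 1) n B) = _
    rw [ih (k + 1) B]
    ext z
    simp only [Sstep, Set.mem_iUnion, Set.mem_image]
    constructor
    · intro hz
      obtain ⟨i, hi, z', hz', rfl⟩ := hz
      obtain ⟨t, ht, b, hb, rfl⟩ := hz'
      exact ⟨i :: t, mem_words_succ.mpr ⟨i, hi, t, ht, rfl⟩, b, hb, rfl⟩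
    · intro hz
      obtain ⟨w, hw, b, hb, rfl⟩ := hz
      obtain ⟨i, hi, t, ht, rfl⟩ := mem_words_succ.mp hw
      exact ⟨i, hi, wordComp sys t b, ⟨t, ht, b, hb, rfl⟩, rfl⟩

lemma F_eq_iUnion {sys : NAIFS E} {F : ℕ → Set E}
    (hinv : ∀ k, F k = Sstep sys k (F (k + 1))) :
    ∀ (n k : ℕ), F k = ⋃ w ∈ words sys k n, wordComp sys w '' F (k + n) := by
  have hiter : ∀ (n k : ℕ), F k = SiterN sys k n (F (k + n)) := by
    intro n
    induction n with
    | zero => intro k; rfl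
    | succ n ih =>
      intro k
      show F k = Sstep sys k (SiterN sys (k + 1) n (F (k + (n + 1))))
      rw [show k + (n + 1) = k + 1 + n by omega, ← ih (k + 1), ← hinv k]
  intro n k
  rw [hiter n k, SiterN_eq_iUnion]

lemma word_image_subset_U {sys : NAIFS E} {U : ℕ → Set E}
    (hUnest : ∀ k, Sstep sys k (U (k + 1)) ⊆ U k) :
    ∀ (n k : ℕ) (w : List ℕ), w ∈ words sys k n →
      wordComp sys w '' U (k + n) ⊆ U k := by
  intro n
  induction n with
  | zero =>
    intro k w hw
    rw [mem_words_zero] at hw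
    subst hw
    simp [wordComp]
  | succ n ih =>
    intro k w hw
    obtain ⟨i, hi, t, ht, rfl⟩ := mem_words_succ.mp hw
    have h1 : wordComp sys (i :: t) '' U (k + (n + 1)) =
        sys.f i '' (wordComp sys t '' U (k + 1 + n)) := by
      rw [show k + (n + 1) = k + 1 + n by omega, ← Set.image_comp]
      rfl
    rw [h1]
    refine subset_trans (Set.image_mono (ih (k + 1) t ht)) ?_
    refine subset_trans ?_ (hUnest k)
    exact Set.subset_iUnion₂ (s := fun i _ => sys.f i '' U (k + 1)) i hi

lemma word_disjoint {sys : NAIFS E} {U : ℕ → Set E}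
    (hsim : ∀ i x y, dist (sys.f i x) (sys.f i y) = sys.σ i * dist x y)
    (hUnest : ∀ k, Sstep sys k (U (k + 1)) ⊆ U k)
    (hUsep : ∀ k, 1 ≤ k → ∀ i ∈ sys.I k, ∀ j ∈ sys.I k, i ≠ j →
      sys.f i '' U k ∩ sys.f j '' U k = ∅) :
    ∀ (n k : ℕ) (w w' : List ℕ), w ∈ words sys k n → w' ∈ words sys k n → w ≠ w' →
      wordComp sys w '' U (k + n) ∩ wordComp sys w' '' U (k + n) = ∅ := by
  intro n
  induction n with
  | zero =>
    intro k w w' hw hw' hne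
    rw [mem_words_zero] at hw hw'
    exact absurd (hw.trans hw'.symm) hne
  | succ n ih =>
    intro k w w' hw hw' hne
    obtain ⟨i, hi, t, ht, rfl⟩ := mem_words_succ.mp hw
    obtain ⟨i', hi', t', ht', rfl⟩ := mem_words_succ.mp hw'
    have himg : ∀ (j : ℕ) (s : List ℕ), wordComp sys (j :: s) '' U (k + (n + 1)) =
        sys.f j '' (wordComp sys s '' U (k + 1 + n)) := by
      intro j s
      rw [show k + (n + 1) = k + 1 + n by omega, ← Set.image_comp]
      rfl
    rw [himg, himg]
    by_cases hii : i = i'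
    · subst hii
      have htt : t ≠ t' := fun h => hne (by rw [h])
      have hfinj : Function.Injective (sys.f i) := by
        intro x y hxy
        have := hsim i x y
        rw [hxy, dist_self] at this
        have := (mul_eq_zero.mp this.symm).resolve_left (sys.σ_pos i).ne'
        exact dist_eq_zero.mp this
      rw [← Set.image_inter hfinj, ih (k + 1) t t' ht ht' htt, Set.image_empty]
    · have h1 : sys.f i '' (wordComp sys t '' U (k + 1 + n)) ⊆ sys.f i '' U (k + 1) :=
        Set.image_mono (word_image_subset_U hUnest n (k + 1) t ht)
      have h2 : sys.f i' '' (wordComp sys t' '' U (k + 1 + n)) ⊆ sys.f i' '' U (k + 1) :=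
        Set.image_mono (word_image_subset_U hUnest n (k + 1) t' ht')
      have := hUsep (k + 1) (Nat.le_add_left 1 k) i hi i' hi' hii
      exact Set.eq_empty_of_subset_empty (this ▸ Set.inter_subset_inter h1 h2)

end Words

section WordsEuclidean

variable {d : ℕ}

lemma word_isOpen_volume (sys : NAIFS (EuclideanSpace ℝ (Fin d)))
    (hsim : ∀ i x y, dist (sys.f i x) (sys.f i y) = sys.σ i * dist x y) :
    ∀ (w : List ℕ) (s : Set (EuclideanSpace ℝ (Fin d))), IsOpen s →
      IsOpen (wordComp sys w '' s) ∧
      volume (wordComp sys w '' s) =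
        ENNReal.ofReal (wordRatio sys w ^ d) * volume s := by
  intro w
  induction w with
  | nil =>
    intro s hs
    refine ⟨by simpa [wordComp] using hs, ?_⟩
    simp [wordComp, wordRatio]
  | cons i t ih =>
    intro s hs
    obtain ⟨iho, ihv⟩ := ih s hs
    have himg : wordComp sys (i :: t) '' s = sys.f i '' (wordComp sys t '' s) := by
      rw [← Set.image_comp]; rfl
    constructor
    · rw [himg]
      exact sim_isOpenMap (sys.f i) (sys.σ_pos i) (hsim i) _ iho
    · have hr : wordRatio sys (i :: t) = sys.σ i * wordRatio sys t := by
        simp [wordRatio]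
      rw [himg, sim_volume (sys.f i) (sys.σ_pos i) (hsim i) _ iho.measurableSet, ihv,
        ← mul_assoc, hr, mul_pow,
        ENNReal.ofReal_mul (pow_nonneg (sys.σ_pos i).le d)]

lemma word_image_closedBall (sys : NAIFS (EuclideanSpace ℝ (Fin d)))
    (hsim : ∀ i x y, dist (sys.f i x) (sys.f i y) = sys.σ i * dist x y)
    (w : List ℕ) (z : EuclideanSpace ℝ (Fin d)) (r : ℝ) :
    wordComp sys w '' closedBall z r = closedBall (wordComp sys w z) (wordRatio sys w * r) :=
  sim_image_closedBall (wordComp sys w) (wordRatio_pos sys w)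
    (wordComp_dist sys hsim w) z r

end WordsEuclidean

/-- If the pullback attractor of a non-autonomous IFS of
similarities satisfies the generalised Moran open-set condition, the ratios
coincide within each step (`σ_i = c_k` for `i ∈ I_k`), and `card(I_k) ≤ N`,
then each `F^k` is equi-homogeneous. -/
theorem attractor_equiHomogeneous_of_equal_ratios_of_card_le {d : ℕ}
    (sys : NAIFS (EuclideanSpace ℝ (Fin d)))
    (hsim : ∀ i x y, dist (sys.f i x) (sys.f i y) = sys.σ i * dist x y)
    (U : ℕ → Set (EuclideanSpace ℝ (Fin d))) (ε₀ : ℝ)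
    (hosc : GenMoranOSC sys U ε₀)
    (c : ℕ → ℝ) (hc : ∀ k, 1 ≤ k → ∀ i ∈ sys.I k, sys.σ i = c k)
    (N : ℝ) (hN : 0 < N) (hcard : ∀ k, 1 ≤ k → ((sys.I k).card : ℝ) ≤ N)
    (F : ℕ → Set (EuclideanSpace ℝ (Fin d)))
    (hF : IsPullbackAttractor sys F) :
    ∀ k, EquiHomogeneous (F k) := by
  classical
  obtain ⟨hcomp, hbF, hinv, hattr⟩ := hF
  obtain ⟨hUne, hUopen, hbU, hUnest, hUsep, hε₀, hUvol⟩ := hosc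
  intro k
  -- uniform bound R
  obtain ⟨r0, hr0⟩ := (hbF.union hbU).subset_closedBall 0
  set R : ℝ := max r0 1 with hRdef
  have hR1 : (1 : ℝ) ≤ R := le_max_right _ _
  have hRpos : (0 : ℝ) < R := lt_of_lt_of_le one_pos hR1
  have hFR : ∀ j, F j ⊆ closedBall 0 R := by
    intro j
    refine subset_trans ?_ (closedBall_subset_closedBall (le_max_left r0 1))
    exact subset_trans (subset_trans (Set.subset_iUnion F j) Set.subset_union_left) hr0
  have hUR : ∀ j, U j ⊆ closedBall 0 R := by
    intro j
    refine subset_trans ?_ (closedBall_subset_closedBall (le_max_left r0 1))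
    exact subset_trans (subset_trans (Set.subset_iUnion U j) Set.subset_union_right) hr0
  -- the degenerate case d = 0
  by_cases hd0 : d = 0
  · subst hd0
    haveI : Subsingleton (EuclideanSpace ℝ (Fin 0)) :=
      ⟨fun a b => by ext i; exact absurd i.2 (by omega)⟩
    intro δ₀ hδ₀
    refine ⟨1, 1, 1, le_refl 1, one_pos, one_pos, fun δ ρ hρ hρδ _ => ?_⟩
    have hδ : 0 < δ := hρ.trans hρδ
    rcases (F k).eq_empty_or_nonempty with he | hne
    · rw [he]; simp
    · have hball : ∀ (x : EuclideanSpace ℝ (Fin 0)) (r : ℝ), 0 < r →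
          closedBall x r ∩ F k = F k := by
        intro x r hr
        refine Set.inter_eq_self_of_subset_right fun z _ => ?_
        rw [mem_closedBall, Subsingleton.elim z x, dist_self]
        exact hr.le
      simp only [one_mul]
      obtain ⟨x₀, hx₀⟩ := hne
      have hL : (⨆ x ∈ F k, coverNumber (closedBall x δ ∩ F k) ρ) =
          coverNumber (F k) ρ := by
        refine le_antisymm (iSup₂_le fun x _ => le_of_eq (by rw [hball x δ hδ])) ?_
        exact le_iSup₂_of_le x₀ hx₀ (le_of_eq (by rw [hball x₀ δ hδ]))
      have hI : (⨅ x ∈ F k, coverNumber (closedBall x δ ∩ F k) ρ) =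
          coverNumber (F k) ρ := by
        refine le_antisymm (iInf₂_le_of_le x₀ hx₀ (le_of_eq (by rw [hball x₀ δ hδ]))) ?_
        exact le_iInf₂ fun x _ => le_of_eq (by rw [hball x δ hδ])
      rw [hL, hI, ENNReal.ofReal_one, one_mul]
  -- the case F k = ∅
  rcases (F k).eq_empty_or_nonempty with he | hne
  · intro δ₀ hδ₀
    refine ⟨1, 1, 1, le_refl 1, one_pos, one_pos, fun δ ρ _ _ _ => ?_⟩
    rw [he]
    simp
  -- main case
  have hd1 : 0 < d := Nat.pos_of_ne_zero hd0
  have hFstep : ∀ j, (F j).Nonempty → (F (j + 1)).Nonempty := by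
    intro j hj
    rcases (F (j + 1)).eq_empty_or_nonempty with hb | hb
    · exfalso
      obtain ⟨z, hz⟩ := hj
      rw [hinv j, hb] at hz
      simp [Sstep] at hz
    · exact hb
  have hFne : ∀ n, (F (k + n)).Nonempty := by
    intro n
    induction n with
    | zero => exact hne
    | succ n ih => exact hFstep _ ih
  set Pr : ℕ → ℝ := fun n => ∏ j ∈ Finset.range n, c (k + j + 1) with hPrdef
  have hcpos : ∀ m, 1 ≤ m → 0 < c m := by
    intro m hm
    obtain ⟨i, hi⟩ := sys.I_nonempty m hm
    rw [← hc m hm i hi]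
    exact sys.σ_pos i
  have hPrpos : ∀ n, 0 < Pr n := fun n =>
    Finset.prod_pos fun j _ => hcpos _ (by omega)
  have hPrw : ∀ n w, w ∈ words sys k n → wordRatio sys w = Pr n := fun n w hw =>
    wordRatio_eq hc n k w hw
  -- attraction forces the ratios to become small
  have hsmall : ∀ δ : ℝ, 0 < δ → ∃ n, Pr n * (2 * R) ≤ δ := by
    intro δ hδ
    set T : ℝ := R + (2 * R + 2) * (2 * R) / δ with hTdef
    have hTR : T - R = (2 * R + 2) * (2 * R) / δ := by ring
    have hTRpos : 0 < T - R := by rw [hTR]; positivity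
    have htend := hattr (closedBall (0 : EuclideanSpace ℝ (Fin d)) T)
      isBounded_closedBall k
    have hev : ∀ᶠ l in atTop,
        semidist (SiterN sys k (l - k) (closedBall 0 T)) (F k) < 1 :=
      htend.eventually (gt_mem_nhds (by norm_num))
    obtain ⟨l, hlsem, hlk⟩ := (hev.and (eventually_ge_atTop k)).exists
    set n := l - k with hndef
    obtain ⟨w, hw⟩ := words_nonempty sys n k
    obtain ⟨z, hz⟩ := hFne n
    have hratio : wordRatio sys w = Pr n := hPrw n w hw
    have hratiopos : 0 < wordRatio sys w := wordRatio_pos sys w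
    have hzR : dist z 0 ≤ R := mem_closedBall.mp (hFR (k + n) hz)
    have hzB : closedBall z (T - R) ⊆ closedBall 0 T := by
      refine closedBall_subset_closedBall' ?_
      linarith
    set e : EuclideanSpace ℝ (Fin d) := EuclideanSpace.single ⟨0, hd1⟩ (1 : ℝ) with hedef
    have he : ‖e‖ = 1 := by
      rw [hedef, EuclideanSpace.norm_single, norm_one]
    set y : EuclideanSpace ℝ (Fin d) :=
      wordComp sys w z + (wordRatio sys w * (T - R)) • e with hydef
    have hdisty : dist y (wordComp sys w z) = wordRatio sys w * (T - R) := by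
      rw [hydef, dist_eq_norm, add_sub_cancel_left, norm_smul, he, mul_one,
        Real.norm_eq_abs, abs_of_nonneg (mul_nonneg hratiopos.le hTRpos.le)]
    have hymem : y ∈ SiterN sys k n (closedBall 0 T) := by
      rw [SiterN_eq_iUnion]
      refine Set.mem_iUnion₂.mpr ⟨w, hw, ?_⟩
      refine Set.image_mono hzB ?_
      rw [word_image_closedBall sys hsim w z (T - R), mem_closedBall, hdisty]
    have hle : EMetric.infEdist y (F k) ≤
        semidist (SiterN sys k n (closedBall 0 T)) (F k) := by
      unfold semidist
      exact le_iSup₂ (f := fun x (_ : x ∈ SiterN sys k n (closedBall 0 T)) =>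
        EMetric.infEdist x (F k)) y hymem
    have hsemle : EMetric.infEdist y (F k) < 1 := lt_of_le_of_lt hle hlsem
    obtain ⟨q, hq, hyq⟩ := EMetric.infEdist_lt_iff.mp hsemle
    have hdyq : dist y q ≤ 1 := by
      rw [show (1 : ℝ≥0∞) = ENNReal.ofReal 1 by simp] at hyq
      exact (edist_lt_ofReal.mp hyq).le
    have hqR : dist q 0 ≤ R := mem_closedBall.mp (hFR k hq)
    have hwzF : wordComp sys w z ∈ F k := by
      rw [F_eq_iUnion hinv n k]
      exact Set.mem_iUnion₂.mpr ⟨w, hw, z, hz, rfl⟩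
    have hwzR : dist (wordComp sys w z) 0 ≤ R := mem_closedBall.mp (hFR k hwzF)
    have key : wordRatio sys w * (T - R) ≤ 2 * R + 1 := by
      have h1 := dist_triangle y q 0
      have h2 := dist_triangle y 0 (wordComp sys w z)
      rw [dist_comm 0 (wordComp sys w z)] at h2
      rw [hdisty] at h2
      linarith
    refine ⟨n, ?_⟩
    rw [← hratio, hTR] at *
    rw [hTR] at key
    have h3 : wordRatio sys w * ((2 * R + 2) * (2 * R) / δ) * δ ≤ (2 * R + 1) * δ :=
      mul_le_mul_of_nonneg_right key hδ.le
    have heq : wordRatio sys w * ((2 * R + 2) * (2 * R) / δ) * δ =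
        wordRatio sys w * ((2 * R + 2) * (2 * R)) := by
      field_simp
    rw [heq] at h3
    rw [← hratio]
    have h5 : wordRatio sys w * (2 * R) * (2 * R + 2) ≤ δ * (2 * R + 2) := by
      nlinarith [h3, hδ.le]
    exact le_of_mul_le_mul_right h5 (by linarith)
  -- constants
  intro δ₀ hδ₀
  set Kq : ℝ≥0∞ := (ENNReal.ofReal ((4 * R) ^ d) *
      volume (ball (0 : EuclideanSpace ℝ (Fin d)) 1)) / ENNReal.ofReal ε₀ with hKqdef
  have hKqtop : Kq ≠ ⊤ := by
    rw [hKqdef]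
    refine (ENNReal.div_lt_top ?_ ?_).ne
    · exact (ENNReal.mul_lt_top ENNReal.ofReal_lt_top measure_ball_lt_top).ne
    · exact (ENNReal.ofReal_pos.mpr hε₀).ne'
  set L1 : ℝ := max Kq.toReal 1 with hL1def
  have hL11 : (1 : ℝ) ≤ L1 := le_max_right _ _
  set N' : ℝ := max N 1 with hN'def
  have hN'1 : (1 : ℝ) ≤ N' := le_max_right _ _
  set M : ℝ := L1 * N' with hMdef
  have hM1 : (1 : ℝ) ≤ M := by nlinarith
  refine ⟨M, 1, 1/4, hM1, one_pos, by norm_num, ?_⟩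
  intro δ ρ hρ hρδ _
  have hδ : 0 < δ := hρ.trans hρδ
  obtain ⟨n, hnP, hnmin⟩ : ∃ n, Pr n * (2 * R) ≤ δ ∧
      ∀ m, m < n → δ < Pr m * (2 * R) := by
    have hex : ∃ n, Pr n * (2 * R) ≤ δ := hsmall δ hδ
    exact ⟨Nat.find hex, Nat.find_spec hex,
      fun m hm => lt_of_not_ge (Nat.find_min hex hm)⟩
  have hPrn : 0 < Pr n := hPrpos n
  set X : ℝ≥0∞ := coverNumber (F (k + n)) (ρ / (2 * Pr n)) with hXdef
  -- counting bound
  have hcount : ∀ x : EuclideanSpace ℝ (Fin d),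
      ((((words sys k n).filter fun w =>
        (wordComp sys w '' F (k + n) ∩ closedBall x δ).Nonempty).card : ℝ)) ≤ M := by
    intro x
    rcases Nat.eq_zero_or_pos n with h0 | hposn
    · subst h0
      have h1 : ((words sys k 0).filter fun w =>
          (wordComp sys w '' F (k + 0) ∩ closedBall x δ).Nonempty).card ≤ 1 := by
        refine le_trans (Finset.card_filter_le _ _) ?_
        simp [words]
      calc (((words sys k 0).filter fun w =>
          (wordComp sys w '' F (k + 0) ∩ closedBall x δ).Nonempty).card : ℝ)
          ≤ 1 := by exact_mod_cast h1
        _ ≤ M := hM1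
    · obtain ⟨m, rfl⟩ : ∃ m, n = m + 1 := ⟨n - 1, by omega⟩
      have hδm : δ < Pr m * (2 * R) := hnmin m (by omega)
      set P := (words sys k m).filter
        (fun t => (wordComp sys t '' F (k + m) ∩ closedBall x δ).Nonempty) with hPdef
      have hsubW : ((words sys k (m + 1)).filter fun w =>
            (wordComp sys w '' F (k + (m + 1)) ∩ closedBall x δ).Nonempty) ⊆
          P.biUnion fun t => (sys.I (k + m + 1)).image fun i => t ++ [i] := by
        intro w hw
        obtain ⟨hw1, hw2⟩ := Finset.mem_filter.mp hw
        obtain ⟨t, ht, i, hi, rfl⟩ := (mem_words_snoc m k (w := w)).mp hw1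
        have himg : wordComp sys (t ++ [i]) '' F (k + (m + 1)) ⊆
            wordComp sys t '' F (k + m) := by
          rw [wordComp_append, Set.image_comp]
          refine Set.image_mono ?_
          intro b hb
          obtain ⟨b0, hb0, rfl⟩ := hb
          have hmem : sys.f i b0 ∈ Sstep sys (k + m) (F (k + m + 1)) :=
            Set.mem_iUnion₂.mpr ⟨i, hi, b0, hb0, rfl⟩
          rw [← hinv (k + m)] at hmem
          exact hmem
        have htP : t ∈ P := Finset.mem_filter.mpr
          ⟨ht, hw2.mono (Set.inter_subset_inter_left _ himg)⟩
        exact Finset.mem_biUnion.mpr ⟨t, htP, Finset.mem_image_of_mem _ hi⟩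
      have hdisj : (↑P : Set (List ℕ)).PairwiseDisjoint
          (fun t => wordComp sys t '' U (k + m)) := by
        intro a ha b hb hab
        have h := word_disjoint hsim hUnest hUsep m k a b
          (Finset.mem_filter.mp (Finset.mem_coe.mp ha)).1
          (Finset.mem_filter.mp (Finset.mem_coe.mp hb)).1 hab
        exact Set.disjoint_iff_inter_eq_empty.mpr h
      have hmeasP : ∀ t ∈ P, MeasurableSet (wordComp sys t '' U (k + m)) := fun t _ =>
        ((word_isOpen_volume sys hsim t (U (k + m)) (hUopen _)).1).measurableSet
      have hsum := measure_biUnion_finset hdisj hmeasP (μ := volume)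
      have hball : (⋃ t ∈ P, wordComp sys t '' U (k + m)) ⊆
          closedBall x (4 * R * Pr m) := by
        intro v hv
        obtain ⟨t, htP, hv'⟩ := Set.mem_iUnion₂.mp hv
        obtain ⟨u, hu, rfl⟩ := hv'
        obtain ⟨htw, hnon⟩ := Finset.mem_filter.mp htP
        obtain ⟨zz, hzz⟩ := hnon
        obtain ⟨⟨z', hz', rfl⟩, hzcb⟩ := hzz
        have hratt : wordRatio sys t = Pr m := hPrw m t htw
        have hdeq : dist (wordComp sys t u) (wordComp sys t z') =
            Pr m * dist u z' := by rw [wordComp_dist sys hsim t, hratt]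
        have huR : dist u 0 ≤ R := mem_closedBall.mp (hUR (k + m) hu)
        have hz'R : dist z' 0 ≤ R := mem_closedBall.mp (hFR (k + m) hz')
        have hduz : dist u z' ≤ 2 * R := by
          have h1 := dist_triangle u 0 z'
          rw [dist_comm 0 z'] at h1
          linarith
        rw [mem_closedBall]
        have h2 := dist_triangle (wordComp sys t u) (wordComp sys t z') x
        have h3 : dist (wordComp sys t z') x ≤ δ := mem_closedBall.mp hzcb
        have h4 : Pr m * dist u z' ≤ Pr m * (2 * R) :=
          mul_le_mul_of_nonneg_left hduz (hPrpos m).le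
        linarith [hdeq, hδm]
      have hterm : ∀ t ∈ P, ENNReal.ofReal (ε₀ * Pr m ^ d) ≤
          volume (wordComp sys t '' U (k + m)) := by
        intro t ht
        have hv := (word_isOpen_volume sys hsim t (U (k + m)) (hUopen _)).2
        calc ENNReal.ofReal (ε₀ * Pr m ^ d)
            = ENNReal.ofReal (Pr m ^ d) * ENNReal.ofReal ε₀ := by
              rw [← ENNReal.ofReal_mul (pow_nonneg (hPrpos m).le d), mul_comm]
          _ ≤ ENNReal.ofReal (Pr m ^ d) * volume (U (k + m)) :=
              mul_le_mul_right (hUvol (k + m)) _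
          _ = volume (wordComp sys t '' U (k + m)) := by
              rw [hv, hPrw m t (Finset.mem_filter.mp ht).1]
      have hcardP : (P.card : ℝ) ≤ L1 := by
        have hq := Finset.card_nsmul_le_sum P _ _ hterm
        rw [← hsum] at hq
        have hq2 := le_trans hq (measure_mono hball)
        rw [Measure.addHaar_closedBall volume x
          (mul_nonneg (by linarith) (hPrpos m).le), finrank_euclideanSpace_fin] at hq2
        have hq3 : (P.card : ℝ≥0∞) * (ENNReal.ofReal ε₀ * ENNReal.ofReal (Pr m ^ d)) ≤
            (ENNReal.ofReal ((4 * R) ^ d) *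
              volume (ball (0 : EuclideanSpace ℝ (Fin d)) 1)) *
              ENNReal.ofReal (Pr m ^ d) := by
          calc (P.card : ℝ≥0∞) * (ENNReal.ofReal ε₀ * ENNReal.ofReal (Pr m ^ d))
              = (P.card : ℝ≥0∞) * ENNReal.ofReal (ε₀ * Pr m ^ d) := by
                rw [← ENNReal.ofReal_mul hε₀.le]
            _ ≤ ENNReal.ofReal ((4 * R * Pr m) ^ d) *
                volume (ball (0 : EuclideanSpace ℝ (Fin d)) 1) := by
                rw [← nsmul_eq_mul]; exact hq2
            _ = (ENNReal.ofReal ((4 * R) ^ d) *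
                volume (ball (0 : EuclideanSpace ℝ (Fin d)) 1)) *
                ENNReal.ofReal (Pr m ^ d) := by
                rw [show (4 * R * Pr m) ^ d = (4 * R) ^ d * Pr m ^ d by ring,
                  ENNReal.ofReal_mul (by positivity)]
                ring
        have hq4 : (P.card : ℝ≥0∞) * ENNReal.ofReal ε₀ ≤
            ENNReal.ofReal ((4 * R) ^ d) *
              volume (ball (0 : EuclideanSpace ℝ (Fin d)) 1) := by
          have hne0 : ENNReal.ofReal (Pr m ^ d) ≠ 0 :=
            (ENNReal.ofReal_pos.mpr (pow_pos (hPrpos m) d)).ne'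
          have hnetop : ENNReal.ofReal (Pr m ^ d) ≠ ⊤ := ENNReal.ofReal_ne_top
          rw [← mul_assoc] at hq3
          exact (ENNReal.mul_le_mul_iff_left hne0 hnetop).mp hq3
        have hq5 : (P.card : ℝ≥0∞) ≤ Kq := by
          rw [hKqdef, ENNReal.le_div_iff_mul_le
            (Or.inl ((ENNReal.ofReal_pos.mpr hε₀).ne')) (Or.inl ENNReal.ofReal_ne_top)]
          exact hq4
        calc (P.card : ℝ) = ((P.card : ℝ≥0∞)).toReal := by simp
          _ ≤ Kq.toReal := ENNReal.toReal_mono hKqtop hq5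
          _ ≤ L1 := le_max_left _ _
      have hIcard : ((sys.I (k + m + 1)).card : ℝ) ≤ N' :=
        le_trans (hcard (k + m + 1) (by omega)) (le_max_left _ _)
      have hWP : (((words sys k (m + 1)).filter fun w =>
          (wordComp sys w '' F (k + (m + 1)) ∩ closedBall x δ).Nonempty).card : ℝ) ≤
          (P.card : ℝ) * ((sys.I (k + m + 1)).card : ℝ) := by
        have hb1 := Finset.card_le_card hsubW
        have hb2 := Finset.card_biUnion_le (s := P)
          (t := fun t => (sys.I (k + m + 1)).image fun i => t ++ [i])
        have hb3 : ∑ t ∈ P, ((sys.I (k + m + 1)).image fun i => t ++ [i]).card ≤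
            P.card * (sys.I (k + m + 1)).card := by
          refine le_trans (Finset.sum_le_card_nsmul P _ ((sys.I (k + m + 1)).card)
            fun t _ => Finset.card_image_le) ?_
          rw [smul_eq_mul]
        exact_mod_cast le_trans hb1 (le_trans hb2 hb3)
      calc (((words sys k (m + 1)).filter fun w =>
          (wordComp sys w '' F (k + (m + 1)) ∩ closedBall x δ).Nonempty).card : ℝ)
          ≤ (P.card : ℝ) * ((sys.I (k + m + 1)).card : ℝ) := hWP
        _ ≤ L1 * N' := mul_le_mul hcardP hIcard (Nat.cast_nonneg _) (by linarith)
        _ = M := hMdef.symm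
  -- the upper bound
  have hLHS : ∀ x ∈ F k, coverNumber (closedBall x δ ∩ F k) ρ ≤
      ENNReal.ofReal M * X := by
    intro x hx
    set W := (words sys k n).filter
      (fun w => (wordComp sys w '' F (k + n) ∩ closedBall x δ).Nonempty) with hWdef
    have hdecomp : closedBall x δ ∩ F k =
        ⋃ w ∈ W, (wordComp sys w '' F (k + n) ∩ closedBall x δ) := by
      ext z
      constructor
      · rintro ⟨hzb, hzF⟩
        rw [F_eq_iUnion hinv n k] at hzF
        obtain ⟨w, hw, hzw⟩ := Set.mem_iUnion₂.mp hzF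
        exact Set.mem_iUnion₂.mpr
          ⟨w, Finset.mem_filter.mpr ⟨hw, ⟨z, hzw, hzb⟩⟩, hzw, hzb⟩
      · intro hz
        obtain ⟨w, hwW, hzw, hzb⟩ := Set.mem_iUnion₂.mp hz
        refine ⟨hzb, ?_⟩
        rw [F_eq_iUnion hinv n k]
        exact Set.mem_iUnion₂.mpr ⟨w, (Finset.mem_filter.mp hwW).1, hzw⟩
    rw [hdecomp]
    refine le_trans (coverNumber_biUnion_le W _ ρ) ?_
    have hterm : ∀ w ∈ W,
        coverNumber (wordComp sys w '' F (k + n) ∩ closedBall x δ) ρ ≤ X := by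
      intro w hwW
      have h1 : coverNumber (wordComp sys w '' F (k + n) ∩ closedBall x δ)
          (2 * (ρ / 2)) ≤ coverNumber (wordComp sys w '' F (k + n)) (ρ / 2) :=
        coverNumber_le_of_subset Set.inter_subset_left
      rw [show 2 * (ρ / 2) = ρ by ring] at h1
      have hrw : wordRatio sys w = Pr n := hPrw n w (Finset.mem_filter.mp hwW).1
      have h2 : coverNumber (wordComp sys w '' F (k + n)) (ρ / 2) = X := by
        have h3 := coverNumber_image (f := wordComp sys w) (wordRatio_pos sys w)
          (wordComp_dist sys hsim w) (F (k + n)) (ρ / (2 * Pr n))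
        rw [hrw, show Pr n * (ρ / (2 * Pr n)) = ρ / 2 by field_simp] at h3
        exact h3
      exact le_trans h1 (le_of_eq h2)
    refine le_trans (Finset.sum_le_sum hterm) ?_
    rw [Finset.sum_const, nsmul_eq_mul]
    refine mul_le_mul_left ?_ X
    calc (W.card : ℝ≥0∞) = ENNReal.ofReal (W.card : ℝ) := by
          rw [ENNReal.ofReal_natCast]
      _ ≤ ENNReal.ofReal M := ENNReal.ofReal_le_ofReal (hcount x)
  -- the lower bound
  have hRHS : ∀ y ∈ F k, X ≤
      coverNumber (closedBall y (1 * δ) ∩ F k) (1 / 4 * ρ) := by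
    intro y hy
    have hyF := hy
    rw [F_eq_iUnion hinv n k] at hyF
    obtain ⟨w, hw, hyw⟩ := Set.mem_iUnion₂.mp hyF
    obtain ⟨z0, hz0, rfl⟩ := hyw
    have hrw : wordRatio sys w = Pr n := hPrw n w hw
    have hSsub : wordComp sys w '' F (k + n) ⊆
        closedBall (wordComp sys w z0) (1 * δ) ∩ F k := by
      intro v hv
      obtain ⟨a, ha, rfl⟩ := hv
      constructor
      · rw [mem_closedBall, wordComp_dist sys hsim w, hrw, one_mul]
        have haR : dist a 0 ≤ R := mem_closedBall.mp (hFR (k + n) ha)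
        have hz0R : dist z0 0 ≤ R := mem_closedBall.mp (hFR (k + n) hz0)
        have haz : dist a z0 ≤ 2 * R := by
          have h1 := dist_triangle a 0 z0
          rw [dist_comm 0 z0] at h1
          linarith
        calc Pr n * dist a z0 ≤ Pr n * (2 * R) :=
              mul_le_mul_of_nonneg_left haz hPrn.le
          _ ≤ δ := hnP
      · rw [F_eq_iUnion hinv n k]
        exact Set.mem_iUnion₂.mpr ⟨w, hw, a, ha, rfl⟩
    have h1 : coverNumber (wordComp sys w '' F (k + n)) (2 * (1 / 4 * ρ)) ≤
        coverNumber (closedBall (wordComp sys w z0) (1 * δ) ∩ F k) (1 / 4 * ρ) :=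
      coverNumber_le_of_subset hSsub
    rw [show 2 * (1 / 4 * ρ) = ρ / 2 by ring] at h1
    have h2 : coverNumber (wordComp sys w '' F (k + n)) (ρ / 2) = X := by
      have h3 := coverNumber_image (f := wordComp sys w) (wordRatio_pos sys w)
        (wordComp_dist sys hsim w) (F (k + n)) (ρ / (2 * Pr n))
      rw [hrw, show Pr n * (ρ / (2 * Pr n)) = ρ / 2 by field_simp] at h3
      exact h3
    rw [← h2]
    exact h1
  exact le_trans (iSup₂_le hLHS) (mul_le_mul_right (le_iInf₂ hRHS) _)
end
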